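/- Let f(1+x) = Σ_{n≥0} a_n x^n ∈ 1 + xF_p[[x]] be an endomorphism of the group of 1-units with linear coefficient a_1 = 0. Then f(1+x) = g(1+x)^p for some endomorphism g of the 1-units. -/

import Mathlib

open PowerSeries

/-- Coefficientwise substitution of a power series `x` with zero constant term into `f`. -/
noncomputable def applySeries {R : Type*} [CommRing R] (f x : PowerSeries R) : PowerSeries R :=
  PowerSeries.mk fun k => ∑ n ∈ Finset.range (k + 1), coeff n f * coeff k (x ^ n)

/-- `f ∈ 1 + x R[[x]]` defines an endomorphism of the group of 1-units. -/
def IsOneUnitEndo {R : Type*} [CommRing R] (f : PowerSeries R) : Prop :=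
  constantCoeff f = 1 ∧
    ∀ u v : PowerSeries R, constantCoeff u = 1 → constantCoeff v = 1 →
      applySeries f (u * v - 1) = applySeries f (u - 1) * applySeries f (v - 1)

open Finset

variable {R : Type*} [CommRing R]

lemma coeff_applySeries (f x : PowerSeries R) (k : ℕ) :
    coeff k (applySeries f x) = ∑ n ∈ range (k + 1), coeff n f * coeff k (x ^ n) :=
  coeff_mk _ _

lemma applySeries_X (f : PowerSeries R) : applySeries f X = f := by
  ext k
  rw [coeff_applySeries]
  simp only [coeff_X_pow, mul_ite, mul_one, mul_zero]
  rw [Finset.sum_ite_eq (range (k+1)) k (fun n => coeff n f)]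
  simp

lemma coeff_pow_eq_zero {t : PowerSeries R} (ht : constantCoeff t = 0) {k n : ℕ}
    (h : k < n) : coeff k (t ^ n) = 0 := by
  have hX : (X : PowerSeries R) ∣ t := X_dvd_iff.mpr ht
  have : (X : PowerSeries R) ^ n ∣ t ^ n := pow_dvd_pow_of_dvd hX n
  exact X_pow_dvd_iff.mp this k h

lemma X_pow_dvd_applySeries_sub (f t : PowerSeries R) (ht : constantCoeff t = 0) (m : ℕ) :
    (X : PowerSeries R) ^ m ∣ applySeries f t - ∑ n ∈ range m, C (coeff n f) * t ^ n := by
  rw [X_pow_dvd_iff]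
  intro k hk
  rw [map_sub, coeff_applySeries, map_sum, sub_eq_zero]
  simp only [coeff_C_mul]
  apply Finset.sum_subset
  · exact Finset.range_subset_range.mpr hk
  · intro n _ hn
    rw [coeff_pow_eq_zero ht (by simpa using hn), mul_zero]

lemma coeff_applySeries_X_pow (f : PowerSeries R) (hf0 : constantCoeff f = 1)
    (hf1 : coeff 1 f = 0) {N d : ℕ} (hN : 2 ≤ N) (hd : d < 2 * N) :
    coeff d (applySeries f (X ^ N)) = if d = 0 then 1 else 0 := by
  rw [coeff_applySeries]
  rcases eq_or_ne d 0 with rfl | hd0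
  · simp [← pow_mul, coeff_X_pow, coeff_zero_eq_constantCoeff, hf0]
  · rw [if_neg hd0]
    apply Finset.sum_eq_zero
    intro n _
    rw [← pow_mul, coeff_X_pow]
    rcases eq_or_ne d (N * n) with rfl | hne
    · have hn1 : n = 1 := by
        rcases Nat.lt_or_ge n 2 with h2 | h2
        · interval_cases n <;> omega
        · exfalso; nlinarith
      subst hn1
      rw [hf1, zero_mul]
    · rw [if_neg hne, mul_zero]

lemma key_rec (f : PowerSeries R) (hf : IsOneUnitEndo f) (h1 : coeff 1 f = 0) (j : ℕ) :
    ((j : R) + 1) * coeff (j + 1) f + (j : R) * coeff j f = 0 := by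
  set N := j + 2 with hN
  set K := 2 * j + 2 with hK
  have hu : constantCoeff (1 + X : PowerSeries R) = 1 := by simp
  have hv : constantCoeff (1 + X ^ N : PowerSeries R) = 1 := by
    simp [map_pow, constantCoeff_X, zero_pow (by omega : N ≠ 0)]
  have h := hf.2 (1 + X) (1 + X ^ N) hu hv
  have e1 : ((1 : PowerSeries R) + X) * (1 + X ^ N) - 1 = X + X ^ N * (1 + X) := by ring
  have e2 : ((1 : PowerSeries R) + X) - 1 = X := by ring
  have e3 : ((1 : PowerSeries R) + X ^ N) - 1 = X ^ N := by ring
  rw [e1, e2, e3, applySeries_X] at h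
  set t : PowerSeries R := X + X ^ N * (1 + X) with hts
  have ht : constantCoeff t = 0 := by
    simp [hts, map_pow, constantCoeff_X, zero_pow (by omega : N ≠ 0)]
  -- coefficient K of RHS
  have hR : coeff K (f * applySeries f (X ^ N)) = coeff K f := by
    rw [coeff_mul]
    rw [Finset.sum_eq_single_of_mem (K, 0) (by simp)]
    · rw [coeff_applySeries_X_pow f hf.1 h1 (by omega) (by omega), if_pos rfl, mul_one]
    · rintro ⟨c, d⟩ hmem hne
      have hcd : c + d = K := Finset.HasAntidiagonal.mem_antidiagonal.mp hmem
      have hd0 : d ≠ 0 := by rintro rfl; exact hne (by rw [Prod.mk.injEq]; omega)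
      dsimp only
      rw [coeff_applySeries_X_pow f hf.1 h1 (by omega) (by omega), if_neg hd0, mul_zero]
  -- coefficient K of t ^ n
  have hco : ∀ n ∈ range (K + 1), coeff K (t ^ n) =
      (if n = K then (1 : R) else 0) +
        (n : R) * ((if n = j + 1 then (1 : R) else 0) + (if n = j then (1 : R) else 0)) := by
    intro n _
    rcases Nat.eq_zero_or_pos n with rfl | hn1
    · simp [if_neg (by omega : ¬ (0 : ℕ) = K)]
    obtain ⟨m, rfl⟩ : ∃ m, n = m + 1 := ⟨n - 1, by omega⟩
    rw [hts, add_pow, map_sum]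
    rw [← Finset.sum_subset (Finset.insert_subset_iff.mpr
        ⟨Finset.mem_range.mpr (by omega),
          Finset.singleton_subset_iff.mpr (Finset.mem_range.mpr (by omega))⟩ :
        ({m, m + 1} : Finset ℕ) ⊆ range (m + 1 + 1))]
    · rw [Finset.sum_insert (by simp), Finset.sum_singleton]
      have e1 : (X : R⟦X⟧) ^ m * (X ^ N * (1 + X)) ^ (m + 1 - m) * ((m + 1).choose m : R⟦X⟧) =
          (X ^ (m + N) + X ^ (m + 1 + N)) * C ((m + 1 : ℕ) : R) := by
        rw [(by omega : m + 1 - m = 1), pow_one, Nat.choose_succ_self_right,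
          ← map_natCast (C (R := R)) (m + 1)]
        ring
      have e2 : (X : R⟦X⟧) ^ (m + 1) * (X ^ N * (1 + X)) ^ (m + 1 - (m + 1)) *
          ((m + 1).choose (m + 1) : R⟦X⟧) = X ^ (m + 1) := by
        simp [Nat.choose_self]
      rw [e1, e2, coeff_mul_C, map_add, coeff_X_pow, coeff_X_pow, coeff_X_pow]
      have c1 : (K = m + N) = (m + 1 = j + 1) := by
        apply propext; constructor <;> intro <;> omega
      have c2 : (K = m + 1 + N) = (m + 1 = j) := by
        apply propext; constructor <;> intro <;> omega
      have c3 : (K = m + 1) = (m + 1 = K) := by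
        apply propext; constructor <;> intro <;> omega
      simp only [c1, c2, c3]
      push_cast
      ring
    · intro i hi hni
      simp only [Finset.mem_insert, Finset.mem_singleton, not_or] at hni
      have hi2 : 2 ≤ m + 1 - i := by
        simp only [Finset.mem_range] at hi
        omega
      have hdvd : (X : R⟦X⟧) ^ (K + 1) ∣
          X ^ i * (X ^ N * (1 + X)) ^ (m + 1 - i) * ((m + 1).choose i : R⟦X⟧) := by
        have h1 : (X : R⟦X⟧) ^ (K + 1) ∣ (X ^ N) ^ (m + 1 - i) := by
          rw [← pow_mul]
          exact pow_dvd_pow X (by nlinarith)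
        have h2 : (X : R⟦X⟧) ^ (K + 1) ∣ (X ^ N * (1 + X)) ^ (m + 1 - i) := by
          rw [mul_pow]
          exact h1.mul_right _
        exact (h2.mul_left _).mul_right _
      exact X_pow_dvd_iff.mp hdvd K (Nat.lt_succ_self K)
  -- assemble
  have hL := congrArg (coeff K) h
  rw [coeff_applySeries, hR, Finset.sum_congr rfl (fun n hn => by rw [hco n hn])] at hL
  have hsplit : ∀ n ∈ range (K + 1),
      coeff n f * ((if n = K then (1 : R) else 0) +
        (n : R) * ((if n = j + 1 then (1 : R) else 0) + (if n = j then (1 : R) else 0))) =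
      (if n = K then coeff n f else 0) +
        ((if n = j + 1 then (n : R) * coeff n f else 0) +
          (if n = j then (n : R) * coeff n f else 0)) := by
    intro n _
    split_ifs <;> ring
  rw [Finset.sum_congr rfl hsplit, Finset.sum_add_distrib, Finset.sum_add_distrib,
    Finset.sum_ite_eq' (range (K + 1)) K (fun n => coeff n f),
    Finset.sum_ite_eq' (range (K + 1)) (j + 1) (fun n => (n : R) * coeff n f),
    Finset.sum_ite_eq' (range (K + 1)) j (fun n => (n : R) * coeff n f),
    if_pos (Finset.mem_range.mpr (by omega)), if_pos (Finset.mem_range.mpr (by omega)),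
    if_pos (Finset.mem_range.mpr (by omega))] at hL
  push_cast at hL
  linear_combination hL

section ZModP

variable {p : ℕ} [Fact p.Prime]

instance : CharP (PowerSeries (ZMod p)) p :=
  charP_of_injective_ringHom (C_injective (R := ZMod p)) p

lemma coeff_eq_zero_of_not_dvd (f : PowerSeries (ZMod p)) (hf : IsOneUnitEndo f)
    (h1 : coeff 1 f = 0) {n : ℕ} (hn : ¬ p ∣ n) : coeff n f = 0 := by
  have key : ∀ n : ℕ, (n : ZMod p) * coeff n f = 0 := by
    intro n
    induction n with
    | zero => simp
    | succ m ih =>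
      have h := key_rec f hf h1 m
      push_cast
      linear_combination h - ih
  have hne : (n : ZMod p) ≠ 0 := fun h0 =>
    hn ((ZMod.natCast_eq_zero_iff n p).mp h0)
  rcases mul_eq_zero.mp (key n) with h | h
  · exact absurd h hne
  · exact h

lemma sumPowChar (m : ℕ) (c : ℕ → ZMod p) (t : PowerSeries (ZMod p)) :
    (∑ n ∈ range m, C (c n) * t ^ n) ^ p
      = ∑ n ∈ range m, C (c n) * t ^ (p * n) := by
  rw [← frobenius_def (R := PowerSeries (ZMod p)) (p := p), map_sum]
  apply Finset.sum_congr rfl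
  intro n _
  rw [frobenius_def, mul_pow, ← map_pow, ZMod.pow_card, ← pow_mul, mul_comm n p]

lemma applySeries_pth (f : PowerSeries (ZMod p))
    (hcoef : ∀ n : ℕ, ¬ p ∣ n → coeff n f = 0)
    (t : PowerSeries (ZMod p)) (ht : constantCoeff t = 0) :
    applySeries f t = (applySeries (mk fun n => coeff (p * n) f) t) ^ p := by
  set g : PowerSeries (ZMod p) := mk fun n => coeff (p * n) f with hg
  have hp2 : 2 ≤ p := (Fact.out : p.Prime).two_le
  ext k
  set S := ∑ n ∈ range (k + 1), C (coeff n g) * t ^ n with hS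
  have hdvd2 : (X : PowerSeries (ZMod p)) ^ (k + 1) ∣ (applySeries g t) ^ p - S ^ p :=
    dvd_trans (X_pow_dvd_applySeries_sub g t ht (k + 1)) (sub_dvd_pow_sub_pow _ _ p)
  have hR : coeff k ((applySeries g t) ^ p) = coeff k (S ^ p) := by
    have h := X_pow_dvd_iff.mp hdvd2 k (Nat.lt_succ_self k)
    rwa [map_sub, sub_eq_zero] at h
  have hL : coeff k (applySeries f t)
      = coeff k (∑ n ∈ range (p * (k + 1)), C (coeff n f) * t ^ n) := by
    have h := X_pow_dvd_iff.mp (X_pow_dvd_applySeries_sub f t ht (p * (k + 1))) k (by nlinarith)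
    rwa [map_sub, sub_eq_zero] at h
  rw [hL, hR, hS, sumPowChar]
  congr 1
  rw [Finset.sum_congr rfl (fun i (_ : i ∈ range (k + 1)) =>
    (by rw [hg, coeff_mk] :
      C (coeff i g) * t ^ (p * i)
        = C (coeff (p * i) f) * t ^ (p * i)))]
  rw [← Finset.sum_image (g := fun i => p * i)
      (f := fun n => C (coeff n f) * t ^ n)
      (fun a _ b _ hab => Nat.eq_of_mul_eq_mul_left (by omega) hab)]
  refine (Finset.sum_subset ?_ ?_).symm
  · intro n hn
    simp only [Finset.mem_image, Finset.mem_range] at hn ⊢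
    obtain ⟨i, hi, rfl⟩ := hn
    nlinarith
  · intro n hn hni
    simp only [Finset.mem_image, Finset.mem_range] at hn hni
    have hnd : ¬ p ∣ n := by
      rintro ⟨i, rfl⟩
      refine hni ⟨i, ?_, rfl⟩
      by_contra hik
      push_neg at hik
      nlinarith
    rw [hcoef n hnd, map_zero, zero_mul]

end ZModP

/-- An endomorphism of the 1-units with vanishing linear coefficient is the `p`-th power of an
endomorphism of the 1-units. -/
theorem endo_linear_coeff_zero_is_pth_power {p : ℕ} [Fact p.Prime]
    (f : PowerSeries (ZMod p)) (hf : IsOneUnitEndo f) (h1 : coeff 1 f = 0) :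
    ∃ g : PowerSeries (ZMod p), IsOneUnitEndo g ∧ f = g ^ p := by

  have hp2 : 2 ≤ p := (Fact.out : p.Prime).two_le
  have hcoef : ∀ n : ℕ, ¬ p ∣ n → coeff n f = 0 := fun n hn =>
    coeff_eq_zero_of_not_dvd f hf h1 hn
  refine ⟨mk fun n => coeff (p * n) f, ⟨?_, ?_⟩, ?_⟩
  · rw [← coeff_zero_eq_constantCoeff_apply, coeff_mk, mul_zero,
      coeff_zero_eq_constantCoeff_apply]
    exact hf.1
  · intro u v hu hv
    have hinj : ∀ A B : PowerSeries (ZMod p), A ^ p = B ^ p → A = B := by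
      intro A B hAB
      have h0 : (A - B) ^ p = 0 := by rw [sub_pow_char, hAB, sub_self]
      exact sub_eq_zero.mp ((pow_eq_zero_iff (by omega : p ≠ 0)).mp h0)
    apply hinj
    have h0uv : constantCoeff (u * v - 1) = 0 := by
      simp [map_sub, map_mul, hu, hv]
    have h0u : constantCoeff (u - 1) = 0 := by simp [hu]
    have h0v : constantCoeff (v - 1) = 0 := by simp [hv]
    rw [mul_pow, ← applySeries_pth f hcoef _ h0uv, ← applySeries_pth f hcoef _ h0u,
      ← applySeries_pth f hcoef _ h0v]
    exact hf.2 u v hu hv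
  · have h := applySeries_pth f hcoef X PowerSeries.constantCoeff_X
    rwa [applySeries_X, applySeries_X] at h
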